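/- Let η, μ, c₁, c₂, n, a ∈ ℝ with μ ≠ 0 and c₂ ≠ 0, set k₀ = nη/μ and c₀ = (c₁² − k₀²)/(4c₂), and define g(t) = ( nη − e^{nη(t+a)} nη − c₁μ(1 + e^{nη(t+a)}) ) / ( 2 c₂ μ (1 + e^{nη(t+a)}) ) for t ∈ ℝ. Then g is differentiable and satisfies the quadratic (Riccati) auxiliary equation g′(t) = μ ( c₂ g(t)² + c₁ g(t) + c₀ ) for all t ∈ ℝ. -/

import Mathlib

/-- With `k₀ = nη/μ` and `c₀ = (c₁² − k₀²)/(4c₂)`, the function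
`g(t) = (nη − e^{nη(t+a)} nη − c₁μ(1 + e^{nη(t+a)})) / (2c₂μ(1 + e^{nη(t+a)}))`
satisfies the quadratic (Riccati) auxiliary equation
`g′(t) = μ(c₂ g(t)² + c₁ g(t) + c₀)` for all `t ∈ ℝ`. -/
theorem quadratic_auxiliary_equation_solution
    (η μ c₁ c₂ n a k₀ c₀ : ℝ) (hμ : μ ≠ 0) (hc₂ : c₂ ≠ 0)
    (hk₀ : k₀ = n * η / μ) (hc₀ : c₀ = (c₁ ^ 2 - k₀ ^ 2) / (4 * c₂))
    (g : ℝ → ℝ)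
    (hg : g = fun t =>
      (n * η - Real.exp (n * η * (t + a)) * (n * η)
          - c₁ * μ * (1 + Real.exp (n * η * (t + a))))
        / (2 * c₂ * μ * (1 + Real.exp (n * η * (t + a))))) :
    ∀ t : ℝ, HasDerivAt g (μ * (c₂ * g t ^ 2 + c₁ * g t + c₀)) t := by
  intro t
  set k := n * η with hk
  have hE : HasDerivAt (fun t : ℝ => Real.exp (k * (t + a)))
      (k * Real.exp (k * (t + a))) t := by
    have h1 : HasDerivAt (fun t : ℝ => k * (t + a)) k t := by
      simpa using ((hasDerivAt_id t).add_const a).const_mul k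
    simpa [mul_comm] using h1.exp
  set E := Real.exp (k * (t + a)) with hEdef
  have hEpos : 0 < E := Real.exp_pos _
  have hD : (1 : ℝ) + E ≠ 0 := by positivity
  have hN : HasDerivAt (fun t : ℝ =>
      k - Real.exp (k * (t + a)) * k - c₁ * μ * (1 + Real.exp (k * (t + a))))
      (0 - k * E * k - c₁ * μ * (0 + k * E)) t := by
    exact ((hasDerivAt_const t k).sub (hE.mul_const k)).sub
      (((hasDerivAt_const t (1:ℝ)).add hE).const_mul (c₁ * μ))
  have hDen : HasDerivAt (fun t : ℝ => 2 * c₂ * μ * (1 + Real.exp (k * (t + a))))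
      (2 * c₂ * μ * (0 + k * E)) t := by
    exact ((hasDerivAt_const t (1:ℝ)).add hE).const_mul (2 * c₂ * μ)
  have hDen0 : 2 * c₂ * μ * (1 + E) ≠ 0 := by
    apply mul_ne_zero
    · apply mul_ne_zero (by simpa using hc₂) hμ
    · exact hD
  have hdiv := hN.div hDen hDen0
  rw [hg]
  refine hdiv.congr_deriv ?_
  simp only [← hEdef]
  rw [hc₀, hk₀]
  field_simp
  ring
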